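/- arXiv:1208.0493 — 3 statements merged into one kernel-verified Lean document; each statement's English description precedes it below -/
import Mathlib

section
/- Let N ⊆ ℝ^n be a compact convex set with nonempty interior such that every point on the boundary of N is an extreme point of N. Suppose further that all extreme points of N lie on a common ellipsoid {x : |W(x − c)| = r} for some invertible linear map W, center c, and r > 0. Then N equals the solid ellipsoid {x : |W(x − c)| ≤ r}. -/
/-- A compact convex body all of whose boundary points are extreme and whose
extreme points lie on a common ellipsoid `{x : |W(x−c)| = r}` is the solid
ellipsoid `{x : |W(x−c)| ≤ r}`. -/
theorem stmt_11 (n : ℕ) (N : Set (EuclideanSpace ℝ (Fin n)))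
    (hcompact : IsCompact N) (hconv : Convex ℝ N)
    (hint : (interior N).Nonempty)
    (hext : ∀ x ∈ frontier N, x ∈ Set.extremePoints ℝ N)
    (W : EuclideanSpace ℝ (Fin n) ≃ₗ[ℝ] EuclideanSpace ℝ (Fin n))
    (c : EuclideanSpace ℝ (Fin n)) (r : ℝ) (hr : 0 < r)
    (hell : ∀ x ∈ Set.extremePoints ℝ N, ‖W (x - c)‖ = r) :
    N = {x | ‖W (x - c)‖ ≤ r} := by
  have hNclosed : IsClosed N := hcompact.isClosed
  have hWcont : Continuous fun x : EuclideanSpace ℝ (Fin n) => W x :=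
    (W : EuclideanSpace ℝ (Fin n) →ₗ[ℝ] EuclideanSpace ℝ (Fin n)).continuous_of_finiteDimensional
  have hBconv : Convex ℝ {x : EuclideanSpace ℝ (Fin n) | ‖W (x - c)‖ ≤ r} := by
    intro x hx y hy a b ha hb hab
    have hc : a • c + b • c = c := by rw [← add_smul, hab, one_smul]
    have key : W (a • x + b • y - c) = a • W (x - c) + b • W (y - c) := by
      rw [← map_smul, ← map_smul, ← map_add]
      congr 1
      rw [smul_sub, smul_sub]
      nth_rewrite 1 [← hc]
      abel
    calc ‖W (a • x + b • y - c)‖ = ‖a • W (x - c) + b • W (y - c)‖ := by rw [key]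
      _ ≤ a * ‖W (x - c)‖ + b * ‖W (y - c)‖ := by
          refine (norm_add_le _ _).trans ?_
          rw [norm_smul, norm_smul, Real.norm_eq_abs, Real.norm_eq_abs,
            abs_of_nonneg ha, abs_of_nonneg hb]
      _ ≤ a * r + b * r := by
          have h1 := mul_le_mul_of_nonneg_left hx ha
          have h2 := mul_le_mul_of_nonneg_left hy hb
          exact add_le_add h1 h2
      _ = r := by rw [← add_mul, hab, one_mul]
  have hBclosed : IsClosed {x : EuclideanSpace ℝ (Fin n) | ‖W (x - c)‖ ≤ r} :=
    isClosed_le ((hWcont.comp (continuous_id.sub continuous_const)).norm) continuous_const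
  -- N ⊆ B via Krein–Milman
  have hNB : N ⊆ {x | ‖W (x - c)‖ ≤ r} := by
    have hKM := closure_convexHull_extremePoints hcompact hconv
    rw [← hKM]
    refine (IsClosed.closure_subset_iff hBclosed).2 ?_
    refine convexHull_min ?_ hBconv
    intro x hx
    exact le_of_eq (hell x hx)
  -- frontier points are on the sphere
  have hfr : ∀ x ∈ frontier N, ‖W (x - c)‖ = r := fun x hx => hell x (hext x hx)
  -- interior point has norm < r
  obtain ⟨x0, hx0⟩ := hint
  have hx0N : x0 ∈ N := interior_subset hx0
  have hx0lt : ‖W (x0 - c)‖ < r := by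
    rcases lt_or_eq_of_le (show ‖W (x0 - c)‖ ≤ r from hNB hx0N) with h | h
    · exact h
    · exfalso
      -- dilate x0 away from c slightly; it stays in interior N ⊆ B but has norm > r
      have hx0c : x0 - c ≠ 0 := by
        intro hzero
        rw [hzero, map_zero, norm_zero] at h
        exact absurd h.symm hr.ne'
      have hnorm : 0 < ‖x0 - c‖ := norm_pos_iff.2 hx0c
      obtain ⟨ε, hε, hball⟩ := Metric.isOpen_iff.1 isOpen_interior x0 hx0
      set t : ℝ := ε / (2 * ‖x0 - c‖) with ht
      have ht0 : 0 < t := div_pos hε (by positivity)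
      set y : EuclideanSpace ℝ (Fin n) := x0 + t • (x0 - c) with hy
      have hymem : y ∈ interior N := by
        apply hball
        rw [Metric.mem_ball, dist_eq_norm, hy]
        have : x0 + t • (x0 - c) - x0 = t • (x0 - c) := by abel
        rw [this, norm_smul, Real.norm_eq_abs, abs_of_pos ht0, ht]
        rw [div_mul_eq_mul_div, mul_comm (2 : ℝ) ‖x0 - c‖, ← div_div,
          mul_div_assoc, div_self hnorm.ne', mul_one]
        linarith
      have hyB : ‖W (y - c)‖ ≤ r := hNB (interior_subset hymem)
      have hyval : ‖W (y - c)‖ = (1 + t) * r := by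
        have hyc : y - c = (1 + t) • (x0 - c) := by
          rw [hy, add_smul, one_smul]; abel
        rw [hyc, map_smul, norm_smul, Real.norm_eq_abs, abs_of_pos (by linarith : (0:ℝ) < 1 + t), h]
      rw [hyval] at hyB
      nlinarith
  refine Set.Subset.antisymm hNB ?_
  -- B ⊆ N
  intro y hy
  by_contra hyN
  -- segment from x0 to y hits the frontier
  have hseg : (segment ℝ x0 y ∩ frontier N).Nonempty := by
    by_contra hempty
    rw [Set.not_nonempty_iff_eq_empty] at hempty
    have hcover : segment ℝ x0 y ⊆ interior N ∪ (closure N)ᶜ := by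
      intro z hz
      by_cases h1 : z ∈ interior N
      · exact Or.inl h1
      · by_cases h2 : z ∈ closure N
        · exact absurd (show z ∈ segment ℝ x0 y ∩ frontier N from ⟨hz, h2, h1⟩)
            (by rw [hempty]; exact Set.notMem_empty z)
        · exact Or.inr h2
    have hdisj : Disjoint (interior N) (closure N)ᶜ :=
      Set.disjoint_compl_right_iff_subset.2 (interior_subset.trans subset_closure)
    rcases (convex_segment x0 y).isPreconnected.subset_or_subset isOpen_interior
        isClosed_closure.isOpen_compl
        hdisj hcover with h | h
    · exact hyN (interior_subset (h (right_mem_segment ℝ x0 y)))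
    · exact (h (left_mem_segment ℝ x0 y)) (subset_closure hx0N)
  obtain ⟨z, hzseg, hzfr⟩ := hseg
  have hzN : z ∈ N := hNclosed.closure_eq ▸ (frontier_subset_closure hzfr :)
  have hzy : z ≠ y := fun h => hyN (h ▸ hzN)
  obtain ⟨a, b, ha, hb, hab, hz⟩ := hzseg
  have hblt : b < 1 := by
    rcases lt_or_eq_of_le (by linarith : b ≤ 1) with h | h
    · exact h
    · exfalso; apply hzy
      have ha0 : a = 0 := by linarith
      rw [← hz, ha0, h]; simp
  have ha0 : 0 < a := by linarith
  have : ‖W (z - c)‖ < r := by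
    have hc : a • c + b • c = c := by rw [← add_smul, hab, one_smul]
    have key : W (z - c) = a • W (x0 - c) + b • W (y - c) := by
      rw [← hz, ← map_smul, ← map_smul, ← map_add]
      congr 1
      rw [smul_sub, smul_sub]
      nth_rewrite 1 [← hc]
      abel
    calc ‖W (z - c)‖ = ‖a • W (x0 - c) + b • W (y - c)‖ := by rw [key]
      _ ≤ a * ‖W (x0 - c)‖ + b * ‖W (y - c)‖ := by
          refine (norm_add_le _ _).trans ?_
          rw [norm_smul, norm_smul, Real.norm_eq_abs, Real.norm_eq_abs,
            abs_of_pos ha0, abs_of_nonneg hb]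
      _ < a * r + b * r := by
          have h1 : a * ‖W (x0 - c)‖ < a * r := mul_lt_mul_of_pos_left hx0lt ha0
          have h2 : b * ‖W (y - c)‖ ≤ b * r := mul_le_mul_of_nonneg_left hy hb
          linarith
      _ = r := by rw [← add_mul, hab, one_mul]
  exact absurd (hfr z hzfr) (ne_of_lt this)
end

section
/- If a convex set S ⊆ ℝ^k satisfying No Simultaneous Encoding (as above, with all effects observable) has three perfectly distinguishable normalized states ω₁, ω₂, ω₃ (i.e., there exist effects E₁, E₂, E₃ with Eᵢ(ωⱼ) = δ_{ij} and E₁ + E₂ + E₃ = U), then a contradiction arises; hence the gbit has at most two perfectly distinguishable states. -/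
/-- No Simultaneous Encoding for a state space `S`: if an effect `E` decodes
the bit `a` perfectly from the four states `ω a a'`, then no effect reveals
anything about `a'`. -/
def NoSimultaneousEncoding (k : ℕ) (S : Set (Fin k → ℝ)) : Prop :=
  ∀ ω : Bool → Bool → (Fin k → ℝ), (∀ a a', ω a a' ∈ S) →
    ∀ E : (Fin k → ℝ) →ₗ[ℝ] ℝ, (∀ s ∈ S, E s ∈ Set.Icc (0 : ℝ) 1) →
      (∀ a a', E (ω a a') = if a = false then 1 else 0) →
      ∀ E' : (Fin k → ℝ) →ₗ[ℝ] ℝ, (∀ s ∈ S, E' s ∈ Set.Icc (0 : ℝ) 1) →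
        ∀ a, E' (ω a false) = E' (ω a true)

/-- A state space satisfying No Simultaneous Encoding cannot have three
perfectly distinguishable normalized states: the gbit carries at most one
classical bit. -/
theorem stmt_14 (k : ℕ) (S : Set (Fin k → ℝ)) (hconv : Convex ℝ S)
    (U : (Fin k → ℝ) →ₗ[ℝ] ℝ)
    (hNSE : NoSimultaneousEncoding k S)
    (ω₁ ω₂ ω₃ : Fin k → ℝ) (h1 : ω₁ ∈ S) (h2 : ω₂ ∈ S) (h3 : ω₃ ∈ S)
    (hn1 : U ω₁ = 1) (hn2 : U ω₂ = 1) (hn3 : U ω₃ = 1)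
    (E₁ E₂ E₃ : (Fin k → ℝ) →ₗ[ℝ] ℝ)
    (hE1 : ∀ s ∈ S, E₁ s ∈ Set.Icc (0 : ℝ) 1)
    (hE2 : ∀ s ∈ S, E₂ s ∈ Set.Icc (0 : ℝ) 1)
    (hE3 : ∀ s ∈ S, E₃ s ∈ Set.Icc (0 : ℝ) 1)
    (hdist : ∀ i j : Fin 3, (![E₁, E₂, E₃] i) (![ω₁, ω₂, ω₃] j)
      = if i = j then 1 else 0)
    (hsum : E₁ + E₂ + E₃ = U) :
    False := by
  have h11 : E₁ ω₁ = 1 := by simpa using hdist 0 0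
  have h12 : E₁ ω₂ = 0 := by simpa using hdist 0 1
  have h13 : E₁ ω₃ = 0 := by simpa using hdist 0 2
  have h22 : E₂ ω₂ = 1 := by simpa using hdist 1 1
  have h23 : E₂ ω₃ = 0 := by simpa using hdist 1 2
  set ω : Bool → Bool → (Fin k → ℝ) :=
    fun a a' => if a then (if a' then ω₃ else ω₂) else ω₁ with hω
  have hmem : ∀ a a', ω a a' ∈ S := by
    intro a a'; cases a <;> cases a' <;> simp [hω, h1, h2, h3]
  have hdec : ∀ a a', E₁ (ω a a') = if a = false then 1 else 0 := by
    intro a a'; cases a <;> cases a' <;> simp [hω, h11, h12, h13]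
  have := hNSE ω hmem E₁ hE1 hdec E₂ hE2 true
  simp [hω, h22, h23] at this
end

section
/- The only closed connected subgroup of SO(3) that acts transitively on the unit sphere S² ⊆ ℝ³ is SO(3) itself. -/
open Matrix


private lemma aux_inv3 (g : Matrix (Fin 3) (Fin 3) ℝ) (h : gᵀ * g = 1)
    {v w : Fin 3 → ℝ} (hv : g *ᵥ v = w) : gᵀ *ᵥ w = v := by
  rw [← hv, Matrix.mulVec_mulVec, h, Matrix.one_mulVec]

private lemma aux_axis (k : Matrix (Fin 3) (Fin 3) ℝ) (h1 : kᵀ * k = 1)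
    (h2 : k.det = 1) : ∃ u : Fin 3 → ℝ, (∑ i, u i ^ 2) = 1 ∧ k *ᵥ u = u := by
  have hdet : (k - 1).det = 0 := by
    have e : kᵀ * (k - 1) = (1 - k)ᵀ := by
      rw [Matrix.mul_sub, h1, Matrix.mul_one, Matrix.transpose_sub, Matrix.transpose_one]
    have e2 : kᵀ.det * (k - 1).det = (1 - k).det := by
      rw [← Matrix.det_mul, e, Matrix.det_transpose]
    rw [Matrix.det_transpose, h2, one_mul] at e2
    have e3 : (1 - k) = -(k - 1) := (neg_sub k 1).symm
    rw [e3, Matrix.det_neg] at e2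
    simp [Fintype.card_fin] at e2
    linarith
  obtain ⟨v, hv0, hv⟩ := (Matrix.exists_mulVec_eq_zero_iff).mpr hdet
  have hkv : k *ᵥ v = v := by
    have := hv
    rw [Matrix.sub_mulVec, Matrix.one_mulVec, sub_eq_zero] at this
    exact this
  have hsum : 0 < ∑ i, v i ^ 2 := by
    rcases Function.ne_iff.mp hv0 with ⟨i, hi⟩
    have : 0 < v i ^ 2 := lt_of_le_of_ne (sq_nonneg _) (Ne.symm (pow_ne_zero 2 hi))
    have hle : v i ^ 2 ≤ ∑ j, v j ^ 2 :=
      Finset.single_le_sum (fun j _ => sq_nonneg (v j)) (Finset.mem_univ i)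
    linarith
  set n := Real.sqrt (∑ i, v i ^ 2) with hn
  have hnpos : 0 < n := Real.sqrt_pos.mpr hsum
  have hn2 : n ^ 2 = ∑ i, v i ^ 2 := Real.sq_sqrt hsum.le
  refine ⟨n⁻¹ • v, ?_, ?_⟩
  · have : (∑ i, (n⁻¹ • v) i ^ 2) = n⁻¹ ^ 2 * ∑ i, v i ^ 2 := by
      rw [Finset.mul_sum]; congr 1; funext i; simp [Pi.smul_apply, smul_eq_mul, mul_pow]
    rw [this, ← hn2]
    field_simp
  · rw [Matrix.mulVec_smul, hkv]

private lemma aux_traceneg (w : Matrix (Fin 3) (Fin 3) ℝ) (h1 : wᵀ * w = 1)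
    (h2 : w.det = 1) (h3 : w *ᵥ ![0,0,1] = ![0,0,-1]) : w.trace = -1 := by
  have h4 : wᵀ *ᵥ ![0,0,-1] = ![0,0,1] := aux_inv3 w h1 h3
  have c0 : w 0 2 = 0 := by
    have := congrFun h3 0; simpa [Matrix.mulVec, dotProduct, Fin.sum_univ_three] using this
  have c1 : w 1 2 = 0 := by
    have := congrFun h3 1; simpa [Matrix.mulVec, dotProduct, Fin.sum_univ_three] using this
  have c2 : w 2 2 = -1 := by
    have := congrFun h3 2; simpa [Matrix.mulVec, dotProduct, Fin.sum_univ_three] using this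
  have r0 : w 2 0 = 0 := by
    have := congrFun h4 0
    simp [Matrix.mulVec, dotProduct, Fin.sum_univ_three] at this
    linarith
  have r1 : w 2 1 = 0 := by
    have := congrFun h4 1
    simp [Matrix.mulVec, dotProduct, Fin.sum_univ_three] at this
    linarith
  have e00 : w 0 0 ^ 2 + w 1 0 ^ 2 = 1 := by
    have := congrFun (congrFun h1 0) 0
    simp [Matrix.mul_apply, Fin.sum_univ_three, Matrix.one_apply, r0] at this
    nlinarith [this]
  have e01 : w 0 0 * w 0 1 + w 1 0 * w 1 1 = 0 := by
    have := congrFun (congrFun h1 0) 1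
    simp [Matrix.mul_apply, Fin.sum_univ_three, Matrix.one_apply, r0, r1] at this
    nlinarith [this]
  have e11 : w 0 1 ^ 2 + w 1 1 ^ 2 = 1 := by
    have := congrFun (congrFun h1 1) 1
    simp [Matrix.mul_apply, Fin.sum_univ_three, Matrix.one_apply, r1] at this
    nlinarith [this]
  have edet : w 0 0 * w 1 1 - w 0 1 * w 1 0 = -1 := by
    rw [Matrix.det_fin_three, c0, c1, c2, r0, r1] at h2
    nlinarith [h2]
  have key : (w 0 0 + w 1 1) ^ 2 + (w 0 1 - w 1 0) ^ 2 = 0 := by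
    linear_combination e00 + e11 + 2 * edet
  have k1 : (w 0 0 + w 1 1) ^ 2 = 0 := by
    linarith [sq_nonneg (w 0 0 + w 1 1), sq_nonneg (w 0 1 - w 1 0)]
  have hsum : w 0 0 + w 1 1 = 0 := by
    have := sq_eq_zero_iff.mp k1; linarith
  rw [Matrix.trace_fin_three, c2]
  linarith

private lemma aux_so2 (g : Matrix (Fin 3) (Fin 3) ℝ) (h1 : gᵀ * g = 1)
    (h2 : g.det = 1) (h3 : g *ᵥ ![0,0,1] = ![0,0,1]) :
    ∃ a c : ℝ, a ^ 2 + c ^ 2 = 1 ∧ g = !![a, -c, 0; c, a, 0; 0, 0, 1] := by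
  have h4 : gᵀ *ᵥ ![0,0,1] = ![0,0,1] := aux_inv3 g h1 h3
  have c0 : g 0 2 = 0 := by
    have := congrFun h3 0; simpa [Matrix.mulVec, dotProduct, Fin.sum_univ_three] using this
  have c1 : g 1 2 = 0 := by
    have := congrFun h3 1; simpa [Matrix.mulVec, dotProduct, Fin.sum_univ_three] using this
  have c2 : g 2 2 = 1 := by
    have := congrFun h3 2; simpa [Matrix.mulVec, dotProduct, Fin.sum_univ_three] using this
  have r0 : g 2 0 = 0 := by
    have := congrFun h4 0; simpa [Matrix.mulVec, dotProduct, Fin.sum_univ_three] using this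
  have r1 : g 2 1 = 0 := by
    have := congrFun h4 1; simpa [Matrix.mulVec, dotProduct, Fin.sum_univ_three] using this
  set a := g 0 0 with ha
  set b := g 0 1 with hb
  set c := g 1 0 with hc
  set d := g 1 1 with hd
  have e00 : a^2 + c^2 = 1 := by
    have := congrFun (congrFun h1 0) 0
    simp [Matrix.mul_apply, Fin.sum_univ_three, Matrix.one_apply, r0] at this
    nlinarith [this]
  have e01 : a*b + c*d = 0 := by
    have := congrFun (congrFun h1 0) 1
    simp [Matrix.mul_apply, Fin.sum_univ_three, Matrix.one_apply, r0, r1] at this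
    nlinarith [this]
  have e11 : b^2 + d^2 = 1 := by
    have := congrFun (congrFun h1 1) 1
    simp [Matrix.mul_apply, Fin.sum_univ_three, Matrix.one_apply, r1] at this
    nlinarith [this]
  have edet : a*d - b*c = 1 := by
    rw [Matrix.det_fin_three] at h2
    rw [c0, c1, c2, r0, r1] at h2
    nlinarith [h2]
  have key : (a - d)^2 + (b + c)^2 = 0 := by linear_combination e00 + e11 - 2*edet
  have k1 : (a - d)^2 = 0 := by linarith [sq_nonneg (a-d), sq_nonneg (b+c)]
  have k2 : (b + c)^2 = 0 := by linarith [sq_nonneg (a-d), sq_nonneg (b+c)]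
  have hda : d = a := by have := sq_eq_zero_iff.mp k1; linarith
  have hbc : b = -c := by have := sq_eq_zero_iff.mp k2; linarith
  refine ⟨a, c, e00, ?_⟩
  ext i j
  fin_cases i <;> fin_cases j <;>
    simp [← ha, ← hb, ← hc, ← hd, hda, hbc, c0, c1, c2, r0, r1]


private lemma aux_transpose (a b c d e f g h i : ℝ) :
    (!![a,b,c;d,e,f;g,h,i])ᵀ = !![a,d,g;b,e,h;c,f,i] := by
  ext p q; fin_cases p <;> fin_cases q <;> rfl

private lemma aux_basis (u : Fin 3 → ℝ) (hu : (∑ i, u i ^ 2) = 1) :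
    ∃ Q : Matrix (Fin 3) (Fin 3) ℝ, Qᵀ * Q = 1 ∧ Q *ᵥ ![0,0,1] = u := by
  have hu' : u 0 ^ 2 + u 1 ^ 2 + u 2 ^ 2 = 1 := by
    simpa [Fin.sum_univ_three] using hu
  by_cases hxy : u 0 ^ 2 + u 1 ^ 2 = 0
  · have hx : u 0 = 0 := by nlinarith [sq_nonneg (u 0), sq_nonneg (u 1)]
    have hy : u 1 = 0 := by nlinarith [sq_nonneg (u 0), sq_nonneg (u 1)]
    have hz : u 2 ^ 2 = 1 := by nlinarith
    refine ⟨!![1,0,0; 0,u 2,0; 0,0,u 2], ?_, ?_⟩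
    · rw [aux_transpose, Matrix.mul_fin_three, Matrix.one_fin_three]
      ext p q
      fin_cases p <;> fin_cases q <;> simp [Matrix.vecHead, Matrix.vecTail] <;> nlinarith
    · funext p
      fin_cases p <;>
        simp [Matrix.mulVec, dotProduct, Fin.sum_univ_three, hx, hy]
  · have h0 : (0:ℝ) ≤ u 0 ^ 2 + u 1 ^ 2 := by positivity
    set r := Real.sqrt (u 0 ^ 2 + u 1 ^ 2) with hrdef
    have hr2 : r ^ 2 = u 0 ^ 2 + u 1 ^ 2 := Real.sq_sqrt h0
    have hrpos : 0 < r := Real.sqrt_pos.mpr (lt_of_le_of_ne h0 (Ne.symm hxy))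
    have hrne : r ≠ 0 := ne_of_gt hrpos
    obtain ⟨p, hpdef⟩ : ∃ p : ℝ, u 0 / r = p := ⟨_, rfl⟩
    obtain ⟨q, hqdef⟩ : ∃ q : ℝ, u 1 / r = q := ⟨_, rfl⟩
    have hx : u 0 = p * r := by rw [← hpdef]; field_simp
    have hy : u 1 = q * r := by rw [← hqdef]; field_simp
    have hp : p ^ 2 + q ^ 2 = 1 := by
      rw [← hpdef, ← hqdef]; field_simp; linarith [hr2]
    have hz2 : r ^ 2 + u 2 ^ 2 = 1 := by rw [hr2]; linarith
    refine ⟨!![-q, -(u 2)*p, u 0; p, -(u 2)*q, u 1; 0, r, u 2], ?_, ?_⟩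
    · rw [aux_transpose, Matrix.mul_fin_three, Matrix.one_fin_three]
      ext i j
      fin_cases i <;> fin_cases j <;>
        simp [Matrix.vecHead, Matrix.vecTail] <;>
        first
          | ring1
          | linear_combination hp
          | linear_combination (-q) * hx + p * hy
          | linear_combination (u 2)^2 * hp + hz2
          | linear_combination (-(u 2)*p) * hx + (-(u 2)*q) * hy + (-(u 2)*r) * hp
          | linear_combination hu'
    · funext i
      fin_cases i <;>
        simp [Matrix.mulVec, dotProduct, Fin.sum_univ_three]

/-- The only closed connected subgroup of `SO(3)` acting transitively on the
unit sphere `S² ⊆ ℝ³` is `SO(3)` itself. -/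
theorem stmt_15 (G : Set (Matrix (Fin 3) (Fin 3) ℝ))
    (hone : (1 : Matrix (Fin 3) (Fin 3) ℝ) ∈ G)
    (hmul : ∀ g ∈ G, ∀ h ∈ G, g * h ∈ G)
    (hinv : ∀ g ∈ G, gᵀ ∈ G)
    (hSO : ∀ g ∈ G, gᵀ * g = 1 ∧ g.det = 1)
    (hclosed : IsClosed G) (hconn : IsConnected G)
    (htrans : ∀ u v : Fin 3 → ℝ, (∑ i, u i ^ 2) = 1 → (∑ i, v i ^ 2) = 1 →
      ∃ g ∈ G, g *ᵥ u = v) :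
    G = {g : Matrix (Fin 3) (Fin 3) ℝ | gᵀ * g = 1 ∧ g.det = 1} := by
  apply Set.eq_of_subset_of_subset
  · intro g hg; exact hSO g hg
  · rintro g ⟨hg1, hg2⟩
    have he3 : (∑ i, (![0,0,1] : Fin 3 → ℝ) i ^ 2) = 1 := by
      simp [Fin.sum_univ_three]
    have hne3 : (∑ i, (![0,0,-1] : Fin 3 → ℝ) i ^ 2) = 1 := by
      simp [Fin.sum_univ_three]
    -- an element of trace -1 in G
    obtain ⟨w, hwG, hw⟩ := htrans ![0,0,1] ![0,0,-1] he3 hne3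
    obtain ⟨hw1, hw2⟩ := hSO w hwG
    have htrw : w.trace = -1 := aux_traceneg w hw1 hw2 hw
    -- axis of g
    obtain ⟨u, hu, hgu⟩ := aux_axis g hg1 hg2
    obtain ⟨Q, hQ, hQu⟩ := aux_basis u hu
    have hQQ : Q * Qᵀ = 1 := mul_eq_one_comm.mp hQ
    -- conjugated g
    obtain ⟨g', hg'def⟩ : ∃ g', Qᵀ * g * Q = g' := ⟨_, rfl⟩
    have hg'T : g'ᵀ = Qᵀ * gᵀ * Q := by
      rw [← hg'def, Matrix.transpose_mul, Matrix.transpose_mul,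
        Matrix.transpose_transpose, Matrix.mul_assoc]
    have conj_orth : ∀ m : Matrix (Fin 3) (Fin 3) ℝ, mᵀ * m = 1 →
        (Qᵀ * mᵀ * Q) * (Qᵀ * m * Q) = 1 := by
      intro m hm
      calc (Qᵀ * mᵀ * Q) * (Qᵀ * m * Q)
          = Qᵀ * (mᵀ * ((Q * Qᵀ) * (m * Q))) := by noncomm_ring
        _ = Qᵀ * ((mᵀ * m) * Q) := by rw [hQQ]; noncomm_ring
        _ = Qᵀ * Q := by rw [hm]; noncomm_ring
        _ = 1 := hQ
    have hg'1 : g'ᵀ * g' = 1 := by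
      rw [hg'T, ← hg'def]; exact conj_orth g hg1
    have hdQ : Qᵀ.det * Q.det = 1 := by rw [← Matrix.det_mul, hQ, Matrix.det_one]
    have hg'2 : g'.det = 1 := by
      rw [← hg'def, Matrix.det_mul, Matrix.det_mul, hg2, mul_one]
      exact hdQ
    have hg'e3 : g' *ᵥ ![0,0,1] = ![0,0,1] := by
      rw [← hg'def, ← Matrix.mulVec_mulVec, ← Matrix.mulVec_mulVec, hQu, hgu]
      exact aux_inv3 Q hQ hQu
    obtain ⟨a, c, hac, hg'⟩ := aux_so2 g' hg'1 hg'2 hg'e3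
    -- traces
    have conj_trace : ∀ m : Matrix (Fin 3) (Fin 3) ℝ, (Qᵀ * m * Q).trace = m.trace := by
      intro m
      rw [Matrix.trace_mul_cycle, hQQ, Matrix.one_mul]
    have htrg' : g'.trace = 2 * a + 1 := by
      rw [hg', Matrix.trace_fin_three]
      simp [Matrix.vecHead, Matrix.vecTail]
      ring
    have htrg : g.trace = 2 * a + 1 := by
      rw [← conj_trace g, hg'def, htrg']
    have ha1 : -1 ≤ a ∧ a ≤ 1 := by
      constructor <;> nlinarith [sq_nonneg c, sq_nonneg (a-1), sq_nonneg (a+1)]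
    -- IVT
    have hcont : ContinuousOn (fun m : Matrix (Fin 3) (Fin 3) ℝ => m.trace) G :=
      (continuous_id.matrix_trace).continuousOn
    have hIV := hconn.isPreconnected.intermediate_value hwG hone hcont
    have htr1 : (1 : Matrix (Fin 3) (Fin 3) ℝ).trace = 3 := by
      simp [Matrix.trace_one]
    have hmem : g.trace ∈ Set.Icc (w.trace) ((1 : Matrix (Fin 3) (Fin 3) ℝ).trace) := by
      rw [htrw, htr1]
      constructor <;> [linarith [ha1.1]; linarith [ha1.2]]
    obtain ⟨k, hkG, hktr⟩ := hIV hmem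
    replace hktr : k.trace = g.trace := hktr
    obtain ⟨hk1, hk2⟩ := hSO k hkG
    -- move axis of k to u
    obtain ⟨v, hv, hkv⟩ := aux_axis k hk1 hk2
    obtain ⟨h, hhG, hhv⟩ := htrans v u hv hu
    obtain ⟨hh1, _⟩ := hSO h hhG
    obtain ⟨k2, hk2def⟩ : ∃ k2, h * k * hᵀ = k2 := ⟨_, rfl⟩
    have hk2G : k2 ∈ G := by
      rw [← hk2def]
      exact hmul _ (hmul h hhG k hkG) _ (hinv h hhG)
    obtain ⟨hk21, hk22⟩ := hSO k2 hk2G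
    have hk2u : k2 *ᵥ u = u := by
      rw [← hk2def, ← Matrix.mulVec_mulVec, ← Matrix.mulVec_mulVec,
        aux_inv3 h hh1 hhv, hkv, hhv]
    have hk2tr : k2.trace = g.trace := by
      rw [← hk2def, Matrix.trace_mul_cycle]
      have : hᵀ * h * k = k := by rw [hh1, Matrix.one_mul]
      rw [this, hktr]
    -- conjugate k2
    obtain ⟨k2', hk2'def⟩ : ∃ k2', Qᵀ * k2 * Q = k2' := ⟨_, rfl⟩
    have hk2'T : k2'ᵀ = Qᵀ * k2ᵀ * Q := by
      rw [← hk2'def, Matrix.transpose_mul, Matrix.transpose_mul,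
        Matrix.transpose_transpose, Matrix.mul_assoc]
    have hk2'1 : k2'ᵀ * k2' = 1 := by
      rw [hk2'T, ← hk2'def]; exact conj_orth k2 hk21
    have hk2'2 : k2'.det = 1 := by
      rw [← hk2'def, Matrix.det_mul, Matrix.det_mul, hk22, mul_one]
      exact hdQ
    have hk2'e3 : k2' *ᵥ ![0,0,1] = ![0,0,1] := by
      rw [← hk2'def, ← Matrix.mulVec_mulVec, ← Matrix.mulVec_mulVec, hQu, hk2u]
      exact aux_inv3 Q hQ hQu
    obtain ⟨a', c', hac', hk2'⟩ := aux_so2 k2' hk2'1 hk2'2 hk2'e3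
    have htrk2' : k2'.trace = 2 * a' + 1 := by
      rw [hk2', Matrix.trace_fin_three]
      simp [Matrix.vecHead, Matrix.vecTail]
      ring
    have haa : a' = a := by
      have h1' : k2'.trace = g.trace := by rw [← hk2'def, conj_trace, hk2tr]
      rw [htrk2', htrg] at h1'
      linarith
    have hcc : c' = c ∨ c' = -c := by
      have : c' ^ 2 = c ^ 2 := by rw [haa] at hac'; linarith
      have := sq_eq_sq_iff_eq_or_eq_neg.mp this
      tauto
    -- recover g from g'
    have hback : ∀ m : Matrix (Fin 3) (Fin 3) ℝ, Q * (Qᵀ * m * Q) * Qᵀ = m := by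
      intro m
      calc Q * (Qᵀ * m * Q) * Qᵀ = (Q * Qᵀ) * m * (Q * Qᵀ) := by noncomm_ring
        _ = m := by rw [hQQ]; noncomm_ring
    have hgback : Q * g' * Qᵀ = g := by rw [← hg'def]; exact hback g
    have hk2back : Q * k2' * Qᵀ = k2 := by rw [← hk2'def]; exact hback k2
    rcases hcc with hcc | hcc
    · -- k2' = g', so g = k2 ∈ G
      have : k2' = g' := by rw [hk2', hg', hcc, haa]
      have hgk : g = k2 := by rw [← hgback, ← hk2back, this]
      rw [hgk]; exact hk2G
    · -- k2' = g'ᵀ, so g = k2ᵀ ∈ G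
      have hgt : g'ᵀ = !![a, c, 0; -c, a, 0; 0, 0, 1] := by
        rw [hg', aux_transpose]
      have : k2' = g'ᵀ := by
        rw [hk2', hgt, hcc, haa]
        congr 1 <;> norm_num
      have hgk : g = k2ᵀ := by
        have e1 : k2 = Q * g'ᵀ * Qᵀ := by rw [← this]; exact hk2back.symm
        rw [e1, Matrix.transpose_mul, Matrix.transpose_mul,
          Matrix.transpose_transpose, Matrix.transpose_transpose,
          ← Matrix.mul_assoc, hgback]
      rw [hgk]; exact hinv k2 hk2G
end
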